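/- Let σ ∈ [0,1), α ∈ ℝ, U > 0 with α < U, and M > 0. Suppose H : ℝ → ℝ is continuous on [α, U] and satisfies |H(u) - H(û)| ≤ (M / ((u - α)^σ + (û - α)^σ)) · |u - û| for all u, û ∈ (α, U], and let f : ℝ × ℝ → ℝ be locally Lipschitz continuous. Then the composed function F(u) = f(u, H(u)) satisfies an estimate of the same form: there exists M' > 0 such that |F(u) - F(û)| ≤ (M' / ((u - α)^σ + (û - α)^σ)) · |u - û| for all u, û ∈ (α, U]. -/

import Mathlib

open Metric Set

lemma locallyLipschitz_lipschitz_on_compact {X Y : Type*} [MetricSpace X] [MetricSpace Y]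
    {f : X → Y} (hf : LocallyLipschitz f) {K : Set X} (hK : IsCompact K) :
    ∃ C : ℝ, 1 ≤ C ∧ ∀ p ∈ K, ∀ q ∈ K, dist (f p) (f q) ≤ C * dist p q := by
  have fcont := hf.continuous
  choose L t ht hl using hf
  choose ε hε hball using fun x => Metric.mem_nhds_iff.1 (ht x)
  obtain ⟨s, -, hcover⟩ := hK.elim_nhds_subcover (fun x => ball x (ε x / 2))
    (fun x _ => ball_mem_nhds x (by linarith [hε x]))
  rcases s.eq_empty_or_nonempty with rfl | hs
  · refine ⟨1, le_refl 1, fun p hp q hq => ?_⟩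
    exact absurd (hcover hp) (by simp)
  · -- bound on image
    obtain ⟨D, hD⟩ := Metric.isBounded_iff.1 ((hK.image fcont).isBounded)
    set δ : ℝ := s.inf' hs (fun x => ε x / 2) with hδdef
    have hδpos : 0 < δ := by
      apply Finset.lt_inf'_iff hs |>.2
      intro x _; linarith [hε x]
    set C0 : ℝ := s.sup' hs (fun x => (L x : ℝ)) with hC0
    refine ⟨max 1 (max C0 (D / δ)), le_max_left _ _, fun p hp q hq => ?_⟩
    rcases lt_or_ge (dist p q) δ with hlt | hge
    · obtain ⟨x, hxs, hpx⟩ := by simpa using hcover hp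
      have hδx : δ ≤ ε x / 2 := Finset.inf'_le _ hxs
      have hq' : q ∈ ball x (ε x) := by
        rw [Metric.mem_ball]
        calc dist q x ≤ dist q p + dist p x := dist_triangle _ _ _
        _ < δ + ε x / 2 := by rw [dist_comm]; linarith
        _ ≤ ε x := by linarith
      have hp' : p ∈ ball x (ε x) := by
        rw [Metric.mem_ball]; linarith [hε x]
      have := (hl x).dist_le_mul p (hball x hp') q (hball x hq')
      calc dist (f p) (f q) ≤ (L x : ℝ) * dist p q := this
        _ ≤ C0 * dist p q := by
            apply mul_le_mul_of_nonneg_right _ dist_nonneg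
            exact Finset.le_sup' (fun x => (L x : ℝ)) hxs
        _ ≤ max 1 (max C0 (D / δ)) * dist p q := by
            apply mul_le_mul_of_nonneg_right _ dist_nonneg
            exact le_max_of_le_right (le_max_left _ _)
    · have hDnn : 0 ≤ D := le_trans dist_nonneg (hD (mem_image_of_mem f hp) (mem_image_of_mem f hp))
      calc dist (f p) (f q) ≤ D := hD (mem_image_of_mem f hp) (mem_image_of_mem f hq)
        _ = (D / δ) * δ := by field_simp
        _ ≤ (D / δ) * dist p q := by
            apply mul_le_mul_of_nonneg_left hge (div_nonneg hDnn hδpos.le)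
        _ ≤ max 1 (max C0 (D / δ)) * dist p q := by
            apply mul_le_mul_of_nonneg_right _ dist_nonneg
            exact le_max_of_le_right (le_max_right _ _)


/-- If H satisfies the H2-estimate on (α, U] and is continuous
on [α, U], and f : ℝ × ℝ → ℝ is locally Lipschitz, then F(u) = f(u, H(u))
satisfies an estimate of the same form on (α, U]. -/
theorem composition_satisfies_H2_estimate
    (σ α U M : ℝ) (hσ0 : 0 ≤ σ) (hσ1 : σ < 1)
    (hU : 0 < U) (hαU : α < U) (hM : 0 < M)
    (H : ℝ → ℝ)
    (hcont : ContinuousOn H (Set.Icc α U))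
    (hest : ∀ u ∈ Set.Ioc α U, ∀ u' ∈ Set.Ioc α U,
      |H u - H u'| ≤ (M / ((u - α) ^ σ + (u' - α) ^ σ)) * |u - u'|)
    (f : ℝ × ℝ → ℝ) (hf : LocallyLipschitz f) :
    ∃ M' : ℝ, 0 < M' ∧
      ∀ u ∈ Set.Ioc α U, ∀ u' ∈ Set.Ioc α U,
        |f (u, H u) - f (u', H u')| ≤
          (M' / ((u - α) ^ σ + (u' - α) ^ σ)) * |u - u'| := by
  set g : ℝ → ℝ × ℝ := fun u => (u, H u) with hg
  have hKc : IsCompact (g '' Set.Icc α U) :=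
    isCompact_Icc.image_of_continuousOn (continuousOn_id.prodMk hcont)
  obtain ⟨C, hC1, hC⟩ := locallyLipschitz_lipschitz_on_compact hf hKc
  have hCpos : (0:ℝ) < C := lt_of_lt_of_le one_pos hC1
  set Cσ : ℝ := 2 * (U - α) ^ σ with hCσ
  have hCσnn : 0 ≤ Cσ := by
    have := Real.rpow_nonneg (show (0:ℝ) ≤ U - α by linarith) σ
    rw [hCσ]; linarith
  refine ⟨C * (Cσ + M), mul_pos hCpos (by linarith), fun u hu u' hu' => ?_⟩
  set s : ℝ := (u - α) ^ σ + (u' - α) ^ σ with hsdef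
  have hs0 : 0 < s := by
    have h1 : 0 < (u - α) ^ σ := Real.rpow_pos_of_pos (by linarith [hu.1]) σ
    have h2 : 0 < (u' - α) ^ σ := Real.rpow_pos_of_pos (by linarith [hu'.1]) σ
    linarith
  have hsC : s ≤ Cσ := by
    have h1 : (u - α) ^ σ ≤ (U - α) ^ σ :=
      Real.rpow_le_rpow (by linarith [hu.1]) (by linarith [hu.2]) hσ0
    have h2 : (u' - α) ^ σ ≤ (U - α) ^ σ :=
      Real.rpow_le_rpow (by linarith [hu'.1]) (by linarith [hu'.2]) hσ0
    rw [hCσ]; linarith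
  have hmem : ∀ v ∈ Set.Ioc α U, g v ∈ g '' Set.Icc α U :=
    fun v hv => Set.mem_image_of_mem g (Set.Ioc_subset_Icc_self hv)
  have key : dist (f (u, H u)) (f (u', H u')) ≤
      C * max (dist u u') (dist (H u) (H u')) := by
    have := hC _ (hmem u hu) _ (hmem u' hu')
    rwa [Prod.dist_eq] at this
  have hH := hest u hu u' hu'
  have hMs : 0 ≤ M / s := le_of_lt (div_pos hM hs0)
  have hmax : max (dist u u') (dist (H u) (H u')) ≤ (1 + M / s) * |u - u'| := by
    rw [Real.dist_eq, Real.dist_eq]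
    refine max_le ?_ ?_
    · nlinarith [abs_nonneg (u - u')]
    · calc |H u - H u'| ≤ (M / s) * |u - u'| := hH
        _ ≤ (1 + M / s) * |u - u'| := by nlinarith [abs_nonneg (u - u')]
  have hfinal : C * (1 + M / s) ≤ C * (Cσ + M) / s := by
    rw [le_div_iff₀ hs0]
    have hexp : C * (1 + M / s) * s = C * (s + M) := by field_simp
    rw [hexp]
    nlinarith
  calc |f (u, H u) - f (u', H u')| = dist (f (u, H u)) (f (u', H u')) :=
        (Real.dist_eq _ _).symm
    _ ≤ C * max (dist u u') (dist (H u) (H u')) := key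
    _ ≤ C * ((1 + M / s) * |u - u'|) :=
        mul_le_mul_of_nonneg_left hmax hCpos.le
    _ = (C * (1 + M / s)) * |u - u'| := by ring
    _ ≤ (C * (Cσ + M) / s) * |u - u'| :=
        mul_le_mul_of_nonneg_right hfinal (abs_nonneg _)
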